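/- For every real a > 0, every real η with 0 < η < 1/2, and every finite set S of points in ℝ², there exists an origin O = (O₁, O₂) with O₁ ∈ [0, a) and O₂ ∈ [0, a) such that the number of points p = (p₁, p₂) ∈ S satisfying both Int.fract((p₁ − O₁)/a) ∈ [η, 1−η] and Int.fract((p₂ − O₂)/a) ∈ [η, 1−η] is at least (1 − 2η)² · |S|. -/

import Mathlib

open Set MeasureTheory

/-- The covering condition in one coordinate, rewritten as membership in an explicit
union of two intervals determined by `y = Int.fract (x/a)`. -/
lemma stencil_cond_iff (a η x t : ℝ) (ha : 0 < a) (hη0 : 0 < η) (ht : t ∈ Set.Ico (0:ℝ) a) :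
    (Int.fract ((x - t)/a) ∈ Set.Icc η (1-η)) ↔
      (t ∈ Set.Icc (a*(Int.fract (x/a)-1+η)) (a*(Int.fract (x/a)-η)) ∪
        Set.Icc (a*(Int.fract (x/a)+η)) (a*(Int.fract (x/a)+1-η))) := by
  obtain ⟨ht0, hta⟩ := ht
  set y := Int.fract (x/a) with hy
  have hy0 : 0 ≤ y := Int.fract_nonneg _
  have hy1 : y < 1 := Int.fract_lt_one _
  set s := t / a with hs
  have hs0 : 0 ≤ s := div_nonneg ht0 ha.le
  have hs1 : s < 1 := (div_lt_one ha).2 hta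
  have hfr : Int.fract ((x - t)/a) = Int.fract (y - s) := by
    have : (x - t)/a = (y - s) + (⌊x/a⌋ : ℝ) := by
      rw [sub_div, hy, Int.fract]; ring
    rw [this, Int.fract_add_intCast]
  have hmul : ∀ c : ℝ, a * c ≤ t ↔ c ≤ s := by
    intro c; rw [hs, le_div_iff₀ ha, mul_comm]
  have hmul' : ∀ c : ℝ, t ≤ a * c ↔ s ≤ c := by
    intro c; rw [hs, div_le_iff₀ ha, mul_comm]
  rw [hfr]
  simp only [Set.mem_union, Set.mem_Icc, hmul, hmul']
  rcases le_or_gt s y with hsy | hsy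
  · have hf : Int.fract (y - s) = y - s :=
      Int.fract_eq_self.2 ⟨by linarith, by linarith⟩
    rw [hf]
    constructor
    · rintro ⟨h1, h2⟩; left; constructor <;> linarith
    · rintro (⟨h1, h2⟩ | ⟨h1, h2⟩) <;> constructor <;> linarith
  · have hf : Int.fract (y - s) = y - s + 1 := by
      have : Int.fract (y - s) = Int.fract ((y - s + 1) + (-1 : ℤ)) := by
        norm_num
      rw [this, Int.fract_add_intCast, Int.fract_eq_self.2 ⟨by linarith, by linarith⟩]
    rw [hf]
    constructor
    · rintro ⟨h1, h2⟩; right; constructor <;> linarith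
    · rintro (⟨h1, h2⟩ | ⟨h1, h2⟩) <;> constructor <;> linarith

/-- For a single point, the set of origins in `[0,a)` covering it has measure `(1-2η)a`. -/
lemma stencil_vol (a η x : ℝ) (ha : 0 < a) (hη0 : 0 < η) (hη : η < 1/2) :
    volume (Set.Ico (0:ℝ) a ∩ {t | Int.fract ((x - t)/a) ∈ Set.Icc η (1-η)})
      = ENNReal.ofReal ((1 - 2*η) * a) := by
  set y := Int.fract (x/a) with hy
  have hy0 : 0 ≤ y := Int.fract_nonneg _
  have hy1 : y < 1 := Int.fract_lt_one _
  have hset : Set.Ico (0:ℝ) a ∩ {t | Int.fract ((x - t)/a) ∈ Set.Icc η (1-η)}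
      = Set.Ico (0:ℝ) a ∩ (Set.Icc (a*(y-1+η)) (a*(y-η)) ∪ Set.Icc (a*(y+η)) (a*(y+1-η))) := by
    ext t
    simp only [Set.mem_inter_iff, Set.mem_setOf_eq, and_congr_right_iff]
    intro ht
    exact stencil_cond_iff a η x t ha hη0 ht
  rw [hset]
  rcases lt_or_ge y η with hc | hc
  · -- y < η : set = Icc (a*(y+η)) (a*(y+1-η))
    have h1 : Set.Ico (0:ℝ) a ∩ (Set.Icc (a*(y-1+η)) (a*(y-η)) ∪ Set.Icc (a*(y+η)) (a*(y+1-η)))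
        = Set.Icc (a*(y+η)) (a*(y+1-η)) := by
      ext t
      simp only [Set.mem_inter_iff, Set.mem_Ico, Set.mem_union, Set.mem_Icc]
      constructor
      · rintro ⟨⟨h0, hta⟩, (⟨h1, h2⟩ | h)⟩
        · exfalso; nlinarith
        · exact h
      · rintro ⟨h1, h2⟩
        refine ⟨⟨by nlinarith, by nlinarith⟩, Or.inr ⟨h1, h2⟩⟩
    rw [h1, Real.volume_Icc]
    congr 1; ring
  rcases le_or_gt y (1-η) with hc2 | hc2
  · -- η ≤ y ≤ 1-η
    have h1 : Set.Ico (0:ℝ) a ∩ (Set.Icc (a*(y-1+η)) (a*(y-η)) ∪ Set.Icc (a*(y+η)) (a*(y+1-η)))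
        = Set.Icc (0:ℝ) (a*(y-η)) ∪ Set.Ico (a*(y+η)) a := by
      ext t
      simp only [Set.mem_inter_iff, Set.mem_Ico, Set.mem_union, Set.mem_Icc]
      constructor
      · rintro ⟨⟨h0, hta⟩, (⟨h1, h2⟩ | ⟨h1, h2⟩)⟩
        · exact Or.inl ⟨h0, h2⟩
        · exact Or.inr ⟨h1, hta⟩
      · rintro (⟨h1, h2⟩ | ⟨h1, h2⟩)
        · exact ⟨⟨h1, by nlinarith⟩, Or.inl ⟨by nlinarith, h2⟩⟩
        · exact ⟨⟨by nlinarith, h2⟩, Or.inr ⟨h1, by nlinarith⟩⟩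
    rw [h1, measure_union _ measurableSet_Ico, Real.volume_Icc, Real.volume_Ico,
      ← ENNReal.ofReal_add (by nlinarith) (by nlinarith)]
    · congr 1; ring
    · refine Set.disjoint_left.2 ?_
      rintro t ⟨h1, h2⟩ ⟨h3, h4⟩
      nlinarith
  · -- 1-η < y
    have h1 : Set.Ico (0:ℝ) a ∩ (Set.Icc (a*(y-1+η)) (a*(y-η)) ∪ Set.Icc (a*(y+η)) (a*(y+1-η)))
        = Set.Icc (a*(y-1+η)) (a*(y-η)) := by
      ext t
      simp only [Set.mem_inter_iff, Set.mem_Ico, Set.mem_union, Set.mem_Icc]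
      constructor
      · rintro ⟨⟨h0, hta⟩, (h | ⟨h1, h2⟩)⟩
        · exact h
        · exfalso; nlinarith
      · rintro ⟨h1, h2⟩
        exact ⟨⟨by nlinarith, by nlinarith⟩, Or.inl ⟨h1, h2⟩⟩
    rw [h1, Real.volume_Icc]
    congr 1; ring

open Classical in
/-- One-dimensional stencil covering: an averaging argument over the origin. -/
lemma stencil_oneD {α : Type*} (a η : ℝ) (ha : 0 < a) (hη0 : 0 < η) (hη : η < 1/2)
    (T : Finset α) (x : α → ℝ) :
    ∃ O ∈ Set.Ico (0:ℝ) a,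
      (1 - 2*η) * (T.card : ℝ) ≤
        ((T.filter (fun p => Int.fract ((x p - O)/a) ∈ Set.Icc η (1-η))).card : ℝ) := by
  set μ := volume.restrict (Set.Ico (0:ℝ) a) with hμdef
  have hμuniv : μ Set.univ = ENNReal.ofReal a := by
    rw [hμdef, Measure.restrict_apply_univ, Real.volume_Ico, sub_zero]
  have hfin : IsFiniteMeasure μ := ⟨by rw [hμuniv]; exact ENNReal.ofReal_lt_top⟩
  have hμne : μ ≠ 0 := by
    intro h
    rw [h] at hμuniv
    simp only [Measure.coe_zero, Pi.zero_apply] at hμuniv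
    have := ENNReal.ofReal_pos.2 ha
    rw [← hμuniv] at this
    exact lt_irrefl _ this
  -- the counting function
  set B : α → Set ℝ := fun p => {t | Int.fract ((x p - t)/a) ∈ Set.Icc η (1-η)} with hB
  have hBmeas : ∀ p, MeasurableSet (B p) := by
    intro p
    have hm : Measurable fun t : ℝ => Int.fract ((x p - t)/a) :=
      measurable_fract.comp ((measurable_const.sub measurable_id).div_const a)
    exact hm measurableSet_Icc
  set f : ℝ → ℝ := fun t => ∑ p ∈ T, (B p).indicator (fun _ => (1:ℝ)) t with hf
  have hint : ∀ p ∈ T, Integrable ((B p).indicator (fun _ => (1:ℝ))) μ := by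
    intro p _
    rw [integrable_indicator_iff (hBmeas p)]
    exact integrableOn_const (lt_of_le_of_lt (measure_mono (Set.subset_univ _))
      (by rw [hμuniv]; exact ENNReal.ofReal_lt_top)).ne
  have hfint : Integrable f μ := integrable_finset_sum _ hint
  have hcard : ∀ t, f t =
      ((T.filter (fun p => Int.fract ((x p - t)/a) ∈ Set.Icc η (1-η))).card : ℝ) := by
    intro t
    rw [hf]
    simp only [Set.indicator_apply, hB, Set.mem_setOf_eq]
    rw [Finset.card_filter]
    push_cast
    exact Finset.sum_congr rfl (fun p _ => rfl)
  have hintegral : ∫ t, f t ∂μ = (T.card : ℝ) * ((1 - 2*η) * a) := by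
    rw [hf, integral_finset_sum _ hint]
    have : ∀ p ∈ T, ∫ t, (B p).indicator (fun _ => (1:ℝ)) t ∂μ = (1 - 2*η) * a := by
      intro p _
      rw [integral_indicator_const (1:ℝ) (hBmeas p), hμdef, measureReal_def,
        Measure.restrict_apply (hBmeas p), Set.inter_comm,
        stencil_vol a η (x p) ha hη0 hη,
        ENNReal.toReal_ofReal (by nlinarith), smul_eq_mul, mul_one]
    rw [Finset.sum_congr rfl this, Finset.sum_const, nsmul_eq_mul]
  have havg : ⨍ t, f t ∂μ = (1 - 2*η) * (T.card : ℝ) := by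
    rw [average_eq, hintegral, measureReal_def, hμuniv, ENNReal.toReal_ofReal ha.le, smul_eq_mul]
    field_simp
  have hpos : 0 < μ {t | ⨍ u, f u ∂μ ≤ f t} := measure_average_le_pos hμne hfint
  have hne : ({t | ⨍ u, f u ∂μ ≤ f t} ∩ Set.Ico (0:ℝ) a).Nonempty := by
    by_contra h
    rw [Set.not_nonempty_iff_eq_empty] at h
    have hsub : {t | ⨍ u, f u ∂μ ≤ f t} ⊆ (Set.Ico (0:ℝ) a)ᶜ := by
      intro t ht htIco
      exact Set.eq_empty_iff_forall_notMem.1 h t ⟨ht, htIco⟩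
    have hmono : μ {t | ⨍ u, f u ∂μ ≤ f t} ≤ μ (Set.Ico (0:ℝ) a)ᶜ := measure_mono hsub
    have h0 : μ (Set.Ico (0:ℝ) a)ᶜ = 0 := by
      rw [hμdef, Measure.restrict_apply' measurableSet_Ico, Set.compl_inter_self,
        measure_empty]
    exact lt_irrefl _ (lt_of_lt_of_le hpos (hmono.trans h0.le))
  obtain ⟨O, hOavg, hOmem⟩ := hne
  refine ⟨O, hOmem, ?_⟩
  rw [← hcard O, ← havg]
  exact hOavg

open Classical in
/-- Stencil-covering lemma: for any finite set `S` of points in the plane, there is an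
origin `O = (O₁, O₂)` in `[0,a) × [0,a)` such that at least a `(1-2η)²` fraction of the
points of `S` are covered by the inner squares of the stencil, i.e. their offsets modulo
the period `a` lie in the middle fraction `[η, 1-η]` of the cell in each coordinate. -/
theorem stencil_covering (a η : ℝ) (ha : 0 < a) (hη0 : 0 < η) (hη : η < 1/2)
    (S : Finset (ℝ × ℝ)) :
    ∃ O₁ O₂ : ℝ, O₁ ∈ Set.Ico (0:ℝ) a ∧ O₂ ∈ Set.Ico (0:ℝ) a ∧
      (1 - 2*η)^2 * (S.card : ℝ) ≤
        ((S.filter (fun p => Int.fract ((p.1 - O₁)/a) ∈ Set.Icc η (1-η) ∧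
            Int.fract ((p.2 - O₂)/a) ∈ Set.Icc η (1-η))).card : ℝ) := by
  obtain ⟨O₁, hO₁, h₁⟩ := stencil_oneD a η ha hη0 hη S Prod.fst
  set S₁ := S.filter (fun p => Int.fract ((p.1 - O₁)/a) ∈ Set.Icc η (1-η)) with hS₁
  obtain ⟨O₂, hO₂, h₂⟩ := stencil_oneD a η ha hη0 hη S₁ Prod.snd
  refine ⟨O₁, O₂, hO₁, hO₂, ?_⟩
  have hfilter : S.filter (fun p => Int.fract ((p.1 - O₁)/a) ∈ Set.Icc η (1-η) ∧
      Int.fract ((p.2 - O₂)/a) ∈ Set.Icc η (1-η))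
      = S₁.filter (fun p => Int.fract ((p.2 - O₂)/a) ∈ Set.Icc η (1-η)) := by
    rw [hS₁, Finset.filter_filter]
  rw [hfilter]
  have h2η : 0 ≤ 1 - 2*η := by linarith
  calc (1 - 2*η)^2 * (S.card : ℝ) = (1 - 2*η) * ((1 - 2*η) * (S.card : ℝ)) := by ring
    _ ≤ (1 - 2*η) * (S₁.card : ℝ) := by
        exact mul_le_mul_of_nonneg_left h₁ h2η
    _ ≤ _ := h₂
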